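/- Let R be a Noetherian integral domain. A proper ideal P of R is a prime ideal if and only if P is a P²-prime ideal. -/

import Mathlib

/-- A proper ideal `P` of a commutative ring `R` is `I`-prime if whenever
`a * b ∈ P \ I*P`, then `a ∈ P` or `b ∈ P`. -/
def IsIPrime {R : Type*} [CommRing R] (I P : Ideal R) : Prop :=
  P ≠ ⊤ ∧ ∀ a b : R, a * b ∈ P → a * b ∉ I * P → a ∈ P ∨ b ∈ P

/-- A proper ideal `Q` is weakly prime if whenever `a * b ∈ Q \ {0}`,
then `a ∈ Q` or `b ∈ Q`. -/
def IsWeaklyPrime {R : Type*} [CommRing R] (Q : Ideal R) : Prop :=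
  Q ≠ ⊤ ∧ ∀ a b : R, a * b ∈ Q → a * b ≠ 0 → a ∈ Q ∨ b ∈ Q

theorem stmt_9 {R : Type*} [CommRing R] [IsDomain R] [IsNoetherianRing R]
    (P : Ideal R) (hP : P ≠ ⊤) :
    P.IsPrime ↔ IsIPrime (P ^ 2) P := by
  constructor
  · intro h
    exact ⟨hP, fun a b hab _ => h.mem_or_mem hab⟩
  · rintro ⟨-, h⟩
    refine ⟨hP, ?_⟩
    intro a b hab
    by_contra hc
    push_neg at hc
    obtain ⟨ha, hb⟩ := hc
    have key : ∀ x y : R, x * y ∈ P → x ∉ P → y ∉ P → x * y ∈ P ^ 2 * P := by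
      intro x y hxy hx hy
      by_contra hmem
      rcases h x y hxy hmem with h' | h' <;> [exact hx h'; exact hy h']
    have hab3 : a * b ∈ P ^ 2 * P := key a b hab ha hb
    have hpb : ∀ p ∈ P, p * b ∈ P ^ 2 * P := by
      intro p hp
      have h1 : (a + p) * b ∈ P := by
        rw [add_mul]; exact Ideal.add_mem _ hab (Ideal.mul_mem_right _ _ hp)
      have h2 : a + p ∉ P := fun hmem => ha (by simpa using Ideal.sub_mem _ hmem hp)
      have h3 := key _ _ h1 h2 hb
      have : (a + p) * b - a * b ∈ P ^ 2 * P := Ideal.sub_mem _ h3 hab3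
      simpa [add_mul] using this
    have haq : ∀ q ∈ P, a * q ∈ P ^ 2 * P := by
      intro q hq
      have h1 : a * (b + q) ∈ P := by
        rw [mul_add]; exact Ideal.add_mem _ hab (Ideal.mul_mem_left _ _ hq)
      have h2 : b + q ∉ P := fun hmem => hb (by simpa using Ideal.sub_mem _ hmem hq)
      have h3' := key _ _ h1 ha h2
      have : a * (b + q) - a * b ∈ P ^ 2 * P := Ideal.sub_mem _ h3' hab3
      simpa [mul_add] using this
    have hPP : P * P ≤ P ^ 2 * P := by
      rw [Ideal.mul_le]
      intro p hp q hq
      have h1 : (a + p) * (b + q) ∈ P := by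
        have : (a + p) * (b + q) = a * b + (a * q + (p * b + p * q)) := by ring
        rw [this]
        exact Ideal.add_mem _ hab (Ideal.add_mem _ (Ideal.mul_mem_left _ _ hq)
          (Ideal.add_mem _ (Ideal.mul_mem_right _ _ hp) (Ideal.mul_mem_right _ _ hp)))
      have h2 : a + p ∉ P := fun hmem => ha (by simpa using Ideal.sub_mem _ hmem hp)
      have h3 : b + q ∉ P := fun hmem => hb (by simpa using Ideal.sub_mem _ hmem hq)
      have h4 := key _ _ h1 h2 h3
      have : (a + p) * (b + q) - a * b - a * q - p * b ∈ P ^ 2 * P :=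
        Ideal.sub_mem _ (Ideal.sub_mem _ (Ideal.sub_mem _ h4 hab3) (haq q hq)) (hpb p hp)
      have heq : (a + p) * (b + q) - a * b - a * q - p * b = p * q := by ring
      rwa [heq] at this
    -- Nakayama: P^2 ≤ P • P^2
    have hle : (P ^ 2 : Ideal R) ≤ P • (P ^ 2 : Ideal R) := by
      rw [smul_eq_mul]
      calc (P ^ 2 : Ideal R) = P * P := sq P
        _ ≤ P ^ 2 * P := hPP
        _ = P * P ^ 2 := mul_comm _ _
    obtain ⟨r, hr1, hr0⟩ := Submodule.exists_sub_one_mem_and_smul_eq_zero_of_fg_of_le_smul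
      P (P ^ 2) (IsNoetherian.noetherian _) hle
    have hrne : r ≠ 0 := by
      intro h0
      apply hP
      rw [Ideal.eq_top_iff_one]
      have : (0 : R) - 1 ∈ P := h0 ▸ hr1
      simpa using P.neg_mem this
    have hab2 : a * b ∈ (P ^ 2 : Ideal R) := by
      exact Ideal.mul_le_left hab3
    have := hr0 (a * b) hab2
    rw [smul_eq_mul] at this
    rcases mul_eq_zero.mp this with h0 | h0
    · exact hrne h0
    rcases mul_eq_zero.mp h0 with h0 | h0
    · exact ha (h0 ▸ P.zero_mem)
    · exact hb (h0 ▸ P.zero_mem)
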